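/- arXiv:cs/0007039 — 7 statements merged into one kernel-verified Lean document; each statement's English description precedes it below -/
import Mathlib

section
/- Let |~ be a preferential inference relation on L based on ⊢. Let Γ = {¬γ : γ |~ ⊥} and define α ⊢' β iff Γ ∪ {α} ⊢ β. Then |~ satisfies Supraclassicality with respect to ⊢' (α ⊢' β implies α |~ β), Left Logical Equivalence with respect to ⊢' (α ⊢' β, β ⊢' α and α |~ γ imply β |~ γ), Right Weakening with respect to ⊢' (α |~ β and ⊢' β → γ imply α |~ γ), and Consistency Preservation with respect to ⊢' (α |~ ⊥ implies α ⊢' ⊥); hence |~ is a preferential inference relation based on ⊢' satisfying Consistency Preservation. -/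
/-- Propositional formulas over a set `V` of propositional variables,
closed under ∧, ∨, ¬, → and containing ⊤ and ⊥. -/
inductive Form (V : Type) : Type
  | var : V → Form V
  | top : Form V
  | bot : Form V
  | and : Form V → Form V → Form V
  | or : Form V → Form V → Form V
  | not : Form V → Form V
  | imp : Form V → Form V → Form V

/-- Classical boolean evaluation of a formula under a valuation. -/
def Form.eval {V : Type} (v : V → Bool) : Form V → Bool
  | .var p => v p
  | .top => true
  | .bot => false
  | .and a b => (Form.eval v a) && (Form.eval v b)
  | .or a b => (Form.eval v a) || (Form.eval v b)
  | .not a => !(Form.eval v a)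
  | .imp a b => !(Form.eval v a) || (Form.eval v b)

/-- Classical (semantic) propositional entailment. -/
def Form.Sem {V : Type} (X : Set (Form V)) (β : Form V) : Prop :=
  ∀ v : V → Bool, (∀ φ ∈ X, Form.eval v φ = true) → Form.eval v β = true

/-- An entailment relation between sets of formulas and formulas that includes
classical propositional logic, is compact, satisfies the deduction theorem,
and satisfies disjunction in premises. -/
structure Entails (V : Type) where
  ent : Set (Form V) → Form V → Prop
  includes_classical : ∀ X β, Form.Sem X β → ent X β
  compact : ∀ X β, ent X β → ∃ Y, Y ⊆ X ∧ Y.Finite ∧ ent Y β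
  deduction : ∀ X α β, ent (insert α X) β ↔ ent X (Form.imp α β)
  disj_prem : ∀ X α γ β,
    ent (insert α X) β → ent (insert γ X) β → ent (insert (Form.or α γ) X) β

/-- `R` is an inference relation based on the entailment `ent`:
Supraclassicality, Left Logical Equivalence, Right Weakening, And. -/
def IsInferenceRel {V : Type} (ent : Set (Form V) → Form V → Prop)
    (R : Form V → Form V → Prop) : Prop :=
  (∀ α β, ent {α} β → R α β) ∧
  (∀ α β γ, ent {α} β → ent {β} α → R α γ → R β γ) ∧
  (∀ α β γ, R α β → ent ∅ (Form.imp β γ) → R α γ) ∧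
  (∀ α β γ, R α β → R α γ → R α (Form.and β γ))

/-- `R` is a preferential inference relation based on `ent`:
an inference relation satisfying Cut, Cautious Monotonicity and Or. -/
def IsPreferential {V : Type} (ent : Set (Form V) → Form V → Prop)
    (R : Form V → Form V → Prop) : Prop :=
  IsInferenceRel ent R ∧
  (∀ α β γ, R α β → R (Form.and α β) γ → R α γ) ∧
  (∀ α β γ, R α β → R α γ → R (Form.and α β) γ) ∧
  (∀ α β γ, R α γ → R β γ → R (Form.or α β) γ)

/-- `R` is a rational inference relation based on `ent`:
preferential plus Rational Monotonicity. -/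
def IsRational {V : Type} (ent : Set (Form V) → Form V → Prop)
    (R : Form V → Form V → Prop) : Prop :=
  IsPreferential ent R ∧
  (∀ α β γ, ¬ R α (Form.not β) → R α γ → R (Form.and α β) γ)

/-- Consistency Preservation of `R` with respect to `ent`. -/
def ConsPres {V : Type} (ent : Set (Form V) → Form V → Prop)
    (R : Form V → Form V → Prop) : Prop :=
  ∀ α, R α Form.bot → ent {α} Form.bot

/-- A rational ordering: Transitivity, Dominance and Conjunctiveness. -/
def IsRationalOrdering {V : Type} (ent : Set (Form V) → Form V → Prop)
    (le : Form V → Form V → Prop) : Prop :=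
  (∀ α β γ, le α β → le β γ → le α γ) ∧
  (∀ α β, ent {α} β → le α β) ∧
  (∀ α β, le α (Form.and α β) ∨ le β (Form.and α β))

/-- An expectation ordering: a rational ordering whose top is exactly
the consequences of the empty set. -/
def IsExpectationOrdering {V : Type} (ent : Set (Form V) → Form V → Prop)
    (le : Form V → Form V → Prop) : Prop :=
  IsRationalOrdering ent le ∧ ∀ α, (∀ β, le β α) → ent ∅ α

/-- Strict part of an ordering. -/
def ltOf {V : Type} (le : Form V → Form V → Prop) (α β : Form V) : Prop :=
  le α β ∧ ¬ le β α

/-- The map O from consequence relations to orderings: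
`α ≤ β` iff `¬(α ∧ β) |~ ⊥` or not `¬(α ∧ β) |~ α`. -/
def Omap {V : Type} (R : Form V → Form V → Prop) (α β : Form V) : Prop :=
  R (Form.not (Form.and α β)) Form.bot ∨ ¬ R (Form.not (Form.and α β)) α

/-- The map C from orderings to consequence relations:
`α |~ γ` iff either `β ≤ ¬α` for all `β`, or there is `β` with
`α ∧ β ⊢ γ` and `¬α < β`. -/
def Cmap {V : Type} (ent : Set (Form V) → Form V → Prop)
    (le : Form V → Form V → Prop) (α γ : Form V) : Prop :=
  (∀ β, le β (Form.not α)) ∨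
  (∃ β, ent {Form.and α β} γ ∧ ltOf le (Form.not α) β)

/-- The ranked consequence operator based on `ent` induced by a family
`B` of sets of formulas: `α |~ β` iff either `α |~_i β` for some `i`
(i.e. not `B i ⊢ ¬α` and `B i ∪ {α} ⊢ β`), or `⊤ |~_i ¬α` for all `i`. -/
def rankedOp {V I : Type} (ent : Set (Form V) → Form V → Prop)
    (B : I → Set (Form V)) (α β : Form V) : Prop :=
  (∃ i, ¬ ent (B i) (Form.not α) ∧ ent (insert α (B i)) β) ∨
  (∀ i, ¬ ent (B i) (Form.not Form.top) ∧ ent (insert Form.top (B i)) (Form.not α))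

/-- The ordering induced by a ranked consequence operator:
`α ≤ β` iff for all `i`, `B i ⊢ α` implies `B i ⊢ β`. -/
def inducedOrder {V I : Type} (ent : Set (Form V) → Form V → Prop)
    (B : I → Set (Form V)) (α β : Form V) : Prop :=
  ∀ i, ent (B i) α → ent (B i) β

private lemma ent_taut {V : Type} (E : Entails V) (φ : Form V)
    (h : ∀ v, Form.eval v φ = true) : E.ent ∅ φ :=
  E.includes_classical _ _ (fun v _ => h v)

private lemma ent_single {V : Type} (E : Entails V) {α β : Form V}
    (h : ∀ v, Form.eval v α = true → Form.eval v β = true) :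
    E.ent {α} β :=
  E.includes_classical _ _ (fun v hv => h v (hv α rfl))

/-- shifting the underlying entailment to `⊢'` (adding as premises
the negations of all formulas entailing ⊥), `|~` becomes a preferential
inference relation based on `⊢'` satisfying Consistency Preservation. -/
theorem stmt_2 {V : Type} (E : Entails V) (R : Form V → Form V → Prop)
    (hR : IsPreferential E.ent R)
    (Γ : Set (Form V)) (hΓ : Γ = {φ | ∃ γ, R γ Form.bot ∧ φ = Form.not γ})
    (ent' : Set (Form V) → Form V → Prop)
    (hent' : ∀ X β, ent' X β ↔ E.ent (Γ ∪ X) β) :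
    ((∀ α β, ent' {α} β → R α β) ∧
     (∀ α β γ, ent' {α} β → ent' {β} α → R α γ → R β γ) ∧
     (∀ α β γ, R α β → ent' ∅ (Form.imp β γ) → R α γ) ∧
     (∀ α, R α Form.bot → ent' {α} Form.bot)) ∧
    IsPreferential ent' R ∧ ConsPres ent' R := by
  obtain ⟨⟨hSup, hLLE, hRW, hAnd⟩, hCut, hCM, hOr⟩ := hR
  have hRefl : ∀ α : Form V, R α α := fun α => hSup α α (ent_single E (fun v h => h))
  have hMP : ∀ α φ τ : Form V, R α φ → R α (Form.imp φ τ) → R α τ := by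
    intro α φ τ h1 h2
    refine hRW α _ τ (hAnd α φ (Form.imp φ τ) h1 h2) (ent_taut E _ ?_)
    intro v
    cases hφ : Form.eval v φ <;> cases hτ : Form.eval v τ <;> simp [Form.eval, hφ, hτ]
  have hL : ∀ γ α : Form V, R γ Form.bot → R α (Form.not γ) := by
    intro γ α hγ
    have h1 : R γ α := hRW γ Form.bot α hγ (ent_taut E _ (by intro v; simp [Form.eval]))
    have h2 : R (Form.and γ α) Form.bot := hCM γ α Form.bot h1 hγ
    have h3 : R (Form.and α γ) Form.bot :=
      hLLE (Form.and γ α) (Form.and α γ) Form.bot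
        (ent_single E (by intro v h; simp [Form.eval] at h ⊢; tauto))
        (ent_single E (by intro v h; simp [Form.eval] at h ⊢; tauto)) h2
    have h4 : R (Form.and α γ) (Form.not γ) :=
      hRW _ _ _ h3 (ent_taut E _ (by intro v; simp [Form.eval]))
    have h5 : R (Form.and α (Form.not γ)) (Form.not γ) :=
      hSup _ _ (ent_single E (by intro v h; simp [Form.eval] at h ⊢; tauto))
    have h6 := hOr _ _ _ h4 h5
    exact hLLE _ α _
      (ent_single E (by intro v h; simp [Form.eval] at h ⊢; tauto))
      (ent_single E (by
        intro v h; simp [Form.eval] at h ⊢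
        cases hγ' : Form.eval v γ <;> simp [hγ'] <;> tauto)) h6
  have hKey : ∀ (Y : Set (Form V)), Y.Finite → Y ⊆ Γ →
      ∀ φ τ α : Form V, E.ent Y (Form.imp φ τ) → R α φ → R α τ := by
    intro Y hYfin
    refine Set.Finite.induction_on (motive := fun Y _ => Y ⊆ Γ → ∀ φ τ α : Form V, E.ent Y (Form.imp φ τ) → R α φ → R α τ) Y hYfin ?_ ?_
    · intro _ φ τ α h hφ; exact hRW α φ τ hφ h
    · intro a s hnot hfin IH hsub φ τ α h hφ
      have hded : E.ent s (Form.imp a (Form.imp φ τ)) := (E.deduction s a _).mp h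
      have haΓ : a ∈ Γ := hsub (Set.mem_insert a s)
      rw [hΓ] at haΓ
      obtain ⟨γ, hγb, rfl⟩ := haΓ
      have hRa : R α (Form.not γ) := hL γ α hγb
      have himp : R α (Form.imp φ τ) :=
        IH (fun x hx => hsub (Set.mem_insert_of_mem _ hx)) (Form.not γ) (Form.imp φ τ) α hded hRa
      exact hMP α φ τ hφ himp
  have hSup' : ∀ α β, ent' {α} β → R α β := by
    intro α β h
    rw [hent', Set.union_singleton] at h
    have hded : E.ent Γ (Form.imp α β) := (E.deduction Γ α β).mp h
    obtain ⟨Y, hYΓ, hYfin, hYent⟩ := E.compact Γ _ hded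
    exact hKey Y hYfin hYΓ α β α hYent (hRefl α)
  have hRW' : ∀ α β γ, R α β → ent' ∅ (Form.imp β γ) → R α γ := by
    intro α β γ h1 h2
    rw [hent', Set.union_empty] at h2
    obtain ⟨Y, hYΓ, hYfin, hYent⟩ := E.compact Γ _ h2
    exact hKey Y hYfin hYΓ β γ α hYent h1
  have hLLE' : ∀ α β γ, ent' {α} β → ent' {β} α → R α γ → R β γ := by
    intro α β γ h1 h2 h3
    have hab := hSup' α β h1
    have hba := hSup' β α h2
    have h4 : R (Form.and α β) γ := hCM α β γ hab h3
    have h5 : R (Form.and β α) γ :=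
      hLLE _ _ _ (ent_single E (by intro v h; simp [Form.eval] at h ⊢; tauto))
        (ent_single E (by intro v h; simp [Form.eval] at h ⊢; tauto)) h4
    exact hCut β α γ hba h5
  have hCP : ∀ α, R α Form.bot → ent' {α} Form.bot := by
    intro α h
    rw [hent']
    apply E.includes_classical
    intro v hv
    have h1 : Form.eval v (Form.not α) = true :=
      hv _ (Set.mem_union_left _ (by rw [hΓ]; exact ⟨α, h, rfl⟩))
    have h2 : Form.eval v α = true := hv _ (Set.mem_union_right _ rfl)
    simp [Form.eval, h2] at h1
  exact ⟨⟨hSup', hLLE', hRW', hCP⟩, ⟨⟨hSup', hLLE', hRW', hAnd⟩, hCut, hCM, hOr⟩, hCP⟩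
end

section
/- Let ≤ be a rational ordering on L. Then for every formula α ∈ L, either α ≤ β for all β ∈ L, or ¬α ≤ β for all β ∈ L. -/
/-- for every α, either α is below everything, or ¬α is. -/
theorem stmt_4 {V : Type} (E : Entails V) (le : Form V → Form V → Prop)
    (hle : IsRationalOrdering E.ent le) (α : Form V) :
    (∀ β, le α β) ∨ (∀ β, le (Form.not α) β) := by
  obtain ⟨htrans, hdom, hconj⟩ := hle
  have hent : ∀ β, E.ent {Form.and α (Form.not α)} β := by
    intro β
    apply E.includes_classical
    intro v hv
    have := hv _ (Set.mem_singleton _)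
    simp [Form.eval] at this
  rcases hconj α (Form.not α) with h | h
  · left; intro β; exact htrans _ _ _ h (hdom _ _ (hent β))
  · right; intro β; exact htrans _ _ _ h (hdom _ _ (hent β))
end

section
/- Let |~ be a rational inference relation on L based on ⊢, and let ≤' = O(|~). If α |~ ⊥, then β ≤' ¬α for all β ∈ L. -/
/-- if `|~` is rational and `α |~ ⊥`, then `β O(|~) ¬α` for all β. -/
theorem stmt_5 {V : Type} (E : Entails V) (R : Form V → Form V → Prop)
    (hR : IsRational E.ent R) (α : Form V) (h : R α Form.bot) :
    ∀ β, Omap R β (Form.not α) := by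

  obtain ⟨⟨⟨hSup, hLLE, hRW, hAnd⟩, hCut, hCM, hOr⟩, hRM⟩ := hR
  intro β
  by_cases hd : R (Form.not (Form.and β (Form.not α))) Form.bot
  · exact Or.inl hd
  · refine Or.inr (fun hb => hd ?_)
    -- α |~ β by right weakening from α |~ ⊥
    have hab : R α β := hRW α Form.bot β h (E.includes_classical _ _ (by
      intro v _; simp [Form.eval]))
    -- α ∧ β |~ ⊥ by cautious monotonicity
    have h1 : R (Form.and α β) Form.bot := hCM α β Form.bot hab h
    -- δ ∧ β ≡ α ∧ β, so δ ∧ β |~ ⊥ by LLE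
    have e1 : E.ent {Form.and α β} (Form.and (Form.not (Form.and β (Form.not α))) β) :=
      E.includes_classical _ _ (by
        intro v hv
        have := hv _ (Set.mem_singleton _)
        simp [Form.eval] at this ⊢
        simp [this])
    have e2 : E.ent {Form.and (Form.not (Form.and β (Form.not α))) β} (Form.and α β) :=
      E.includes_classical _ _ (by
        intro v hv
        have := hv _ (Set.mem_singleton _)
        simp [Form.eval] at this ⊢
        obtain ⟨h1 | h1, h2⟩ := this <;> simp_all)
    have h2 : R (Form.and (Form.not (Form.and β (Form.not α))) β) Form.bot :=
      hLLE _ _ _ e1 e2 h1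
    -- Cut
    exact hCut _ _ _ hb h2
end

section
/- Let |~ be a rational inference relation on L based on ⊢. Then O(|~) is a rational ordering on L, i.e., it satisfies Transitivity, Dominance, and Conjunctiveness. -/
/-- `O(|~)` of a rational inference relation is a rational ordering. -/
theorem stmt_10 {V : Type} (E : Entails V) (R : Form V → Form V → Prop)
    (hR : IsRational E.ent R) :
    IsRationalOrdering E.ent (Omap R) := by
  obtain ⟨⟨⟨hSup, hLLE, hRW, hAnd⟩, hCut, hCM, hOr⟩, hRM⟩ := hR
  -- derived helpers
  have entS : ∀ a b : Form V, (∀ v, Form.eval v a = true → Form.eval v b = true) →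
      E.ent {a} b := fun a b h =>
    E.includes_classical _ _ (fun v hv => h v (hv a rfl))
  have supS : ∀ a b : Form V, (∀ v, Form.eval v a = true → Form.eval v b = true) →
      R a b := fun a b h => hSup a b (entS a b h)
  have entImp : ∀ b c : Form V, (∀ v, Form.eval v b = true → Form.eval v c = true) →
      E.ent ∅ (Form.imp b c) := fun b c h =>
    E.includes_classical _ _ (fun v _ => by
      cases hb : Form.eval v b <;> simp [Form.eval, hb] <;> exact h v hb)
  have rwS : ∀ a b c : Form V, R a b → (∀ v, Form.eval v b = true → Form.eval v c = true) →
      R a c := fun a b c hab h => hRW a b c hab (entImp b c h)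
  have lleS : ∀ a b c : Form V, (∀ v, Form.eval v a = Form.eval v b) → R a c → R b c :=
    fun a b c h hac =>
      hLLE a b c (entS a b (fun v hv => by rw [← h v]; exact hv))
        (entS b a (fun v hv => by rw [h v]; exact hv)) hac
  have reflR : ∀ a : Form V, R a a := fun a => supS a a (fun v h => h)
  have botR : ∀ a c : Form V, R a Form.bot → R a c := fun a c h =>
    rwS a _ c h (fun v hv => by simp [Form.eval] at hv)
  have contraR : ∀ d p q : Form V, R d p → R d q →
      (∀ v, (Form.eval v p && Form.eval v q) = false) → R d Form.bot := by
    intro d p q hp hq h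
    refine rwS d (Form.and p q) Form.bot (hAnd d p q hp hq) (fun v hv => ?_)
    have h2 := h v
    simp [Form.eval] at hv
    rw [hv.1, hv.2] at h2
    simp at h2
  have downN : ∀ a b : Form V, R a Form.bot →
      (∀ v, Form.eval v b = true → Form.eval v a = true) → R b Form.bot := by
    intro a b hN h
    have h1 : R (Form.or b a) Form.bot := by
      refine lleS a _ _ (fun v => ?_) hN
      have := h v
      cases hb : Form.eval v b <;> simp [Form.eval, hb]
      exact this hb
    have h2 : R (Form.or b a) b := botR _ _ h1
    have h3 : R (Form.and (Form.or b a) b) Form.bot := hCM _ _ _ h2 h1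
    refine lleS _ b _ (fun v => ?_) h3
    cases hb : Form.eval v b <;> simp [Form.eval, hb]
  -- L1 : ¬β |~ ⊥  ⇒  ¬(β∧γ) |~ β
  have L1 : ∀ b c : Form V, R (Form.not b) Form.bot → R (Form.not (Form.and b c)) b := by
    intro b c hN
    have h1 : R (Form.not b) b := botR _ _ hN
    have h2 : R (Form.and b (Form.not (Form.and b c))) b :=
      supS _ _ (fun v hv => by simp [Form.eval] at hv; exact hv.1)
    have h3 := hOr _ _ _ h1 h2
    refine lleS _ _ _ (fun v => ?_) h3
    cases hb : Form.eval v b <;> cases hc : Form.eval v c <;> simp [Form.eval, hb, hc]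
  -- L1' : ¬γ |~ ⊥  ⇒  ¬(β∧γ) |~ γ
  have L1' : ∀ b c : Form V, R (Form.not c) Form.bot → R (Form.not (Form.and b c)) c := by
    intro b c hN
    have h1 : R (Form.not c) c := botR _ _ hN
    have h2 : R (Form.and c (Form.not (Form.and b c))) c :=
      supS _ _ (fun v hv => by simp [Form.eval] at hv; exact hv.1)
    have h3 := hOr _ _ _ h1 h2
    refine lleS _ _ _ (fun v => ?_) h3
    cases hb : Form.eval v b <;> cases hc : Form.eval v c <;> simp [Form.eval, hb, hc]
  -- T1 : the key "modularity" lemma for rational relations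
  have T1 : ∀ x y z : Form V, R (Form.or x z) (Form.not x) →
      ¬ R (Form.or x y) (Form.not x) → R (Form.or y z) (Form.not y) := by
    intro x y z hxz hxy
    have claim1 : R (Form.or x (Form.or y z)) (Form.not x) := by
      have hA : R (Form.and (Form.and y (Form.not x)) (Form.not z)) (Form.not x) :=
        supS _ _ (fun v hv => by simp [Form.eval] at hv ⊢; exact hv.1.2)
      have h3 := hOr _ _ _ hxz hA
      refine lleS _ _ _ (fun v => ?_) h3
      cases hx : Form.eval v x <;> cases hy : Form.eval v y <;> cases hz : Form.eval v z <;>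
        simp [Form.eval, hx, hy, hz]
    by_cases hUy : R (Form.or x (Form.or y z)) (Form.not y)
    · by_cases hUyz : R (Form.or x (Form.or y z)) (Form.not (Form.or y z))
      · -- the disjunction is wholly exceptional
        have hnz : R (Form.or x (Form.or y z)) (Form.not z) :=
          rwS _ _ _ hUyz (fun v hv => by simp [Form.eval] at hv ⊢; exact hv.2)
        have h4 : R (Form.or x (Form.or y z)) (Form.and (Form.not x) (Form.and (Form.not y) (Form.not z))) :=
          hAnd _ _ _ claim1 (hAnd _ _ _ hUy hnz)
        have hNu : R (Form.or x (Form.or y z)) Form.bot := by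
          refine contraR _ _ _ (reflR _) h4 (fun v => ?_)
          cases hx : Form.eval v x <;> cases hy : Form.eval v y <;> cases hz : Form.eval v z <;>
            simp [Form.eval, hx, hy, hz]
        have hNyz : R (Form.or y z) Form.bot := by
          refine downN (Form.or x (Form.or y z)) _ hNu (fun v hv => ?_)
          revert hv
          cases hy : Form.eval v y <;> cases hz : Form.eval v z <;>
            simp [Form.eval, hy, hz]
        exact botR _ _ hNyz
      · have h := hRM (Form.or x (Form.or y z)) (Form.or y z) (Form.not y) hUyz hUy
        refine lleS _ _ _ (fun v => ?_) h
        cases hx : Form.eval v x <;> cases hy : Form.eval v y <;> cases hz : Form.eval v z <;>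
          simp [Form.eval, hx, hy, hz]
    · by_cases hUxy : R (Form.or x (Form.or y z)) (Form.not (Form.or x y))
      · exact absurd (rwS _ _ _ hUxy
          (fun v hv => by simp [Form.eval] at hv ⊢; exact hv.2)) hUy
      · have h := hRM (Form.or x (Form.or y z)) (Form.or x y) (Form.not x) hUxy claim1
        refine absurd (lleS _ _ _ (fun v => ?_) h) hxy
        cases hx : Form.eval v x <;> cases hy : Form.eval v y <;> cases hz : Form.eval v z <;>
          simp [Form.eval, hx, hy, hz]
  refine ⟨?_, ?_, ?_⟩
  · -- Transitivity
    intro α β γ hab hbc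
    by_cases hCα : R (Form.not (Form.and α γ)) α
    · left
      rcases hab with hNA | hnA
      · rcases hbc with hNB | hnB
        · -- both wholly exceptional
          have h1 : R (Form.or (Form.not (Form.and α β)) (Form.not (Form.and β γ))) Form.bot :=
            hOr _ _ _ hNA hNB
          refine downN _ _ h1 (fun v hv => ?_)
          cases ha : Form.eval v α <;> cases hb : Form.eval v β <;> cases hc : Form.eval v γ <;>
            simp [Form.eval, ha, hb, hc] at hv ⊢
        · have hb' : R (Form.not β) Form.bot := by
            refine downN _ _ hNA (fun v hv => ?_)
            simp [Form.eval] at hv ⊢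
            simp [hv]
          exact absurd (L1 β γ hb') hnB
      · rcases hbc with hNB | hnB
        · have hg' : R (Form.not γ) Form.bot := by
            refine downN _ _ hNB (fun v hv => ?_)
            simp [Form.eval] at hv ⊢
            simp [hv]
          have hCγ : R (Form.not (Form.and α γ)) γ := L1' α γ hg'
          refine contraR _ _ _ (hAnd _ _ _ hCα hCγ) (reflR _) (fun v => ?_)
          cases ha : Form.eval v α <;> cases hc : Form.eval v γ <;> simp [Form.eval, ha, hc]
        · -- main case : use T1
          have hx : R (Form.or (Form.not α) (Form.not γ)) (Form.not (Form.not α)) := by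
            have h1 : R (Form.or (Form.not α) (Form.not γ)) α := by
              refine lleS _ _ _ (fun v => ?_) hCα
              cases ha : Form.eval v α <;> cases hc : Form.eval v γ <;>
                simp [Form.eval, ha, hc]
            exact rwS _ _ _ h1 (fun v hv => by simp [Form.eval] at hv ⊢; exact hv)
          have hnxy : ¬ R (Form.or (Form.not α) (Form.not β)) (Form.not (Form.not α)) := by
            intro hcon
            apply hnA
            have h1 : R (Form.not (Form.and α β)) (Form.not (Form.not α)) := by
              refine lleS _ _ _ (fun v => ?_) hcon
              cases ha : Form.eval v α <;> cases hb : Form.eval v β <;>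
                simp [Form.eval, ha, hb]
            exact rwS _ _ _ h1 (fun v hv => by simp [Form.eval] at hv ⊢; exact hv)
          have hyz := T1 (Form.not α) (Form.not β) (Form.not γ) hx hnxy
          have hBβ : R (Form.not (Form.and β γ)) β := by
            have h1 : R (Form.not (Form.and β γ)) (Form.not (Form.not β)) := by
              refine lleS _ _ _ (fun v => ?_) hyz
              cases hb : Form.eval v β <;> cases hc : Form.eval v γ <;>
                simp [Form.eval, hb, hc]
            exact rwS _ _ _ h1 (fun v hv => by simp [Form.eval] at hv ⊢; exact hv)
          exact absurd hBβ hnB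
    · right; exact hCα
  · -- Dominance
    intro α β hent
    by_cases h : R (Form.not (Form.and α β)) α
    · left
      have hsing : ∀ φ : Form V, insert φ (∅ : Set (Form V)) = {φ} := fun φ => by
        ext x; simp
      have e1 : E.ent {Form.or α β} β := by
        have hβ : E.ent (insert β (∅ : Set (Form V))) β :=
          E.includes_classical _ _ (fun v hv => hv β (Set.mem_insert β ∅))
        have hα : E.ent (insert α (∅ : Set (Form V))) β := by
          rw [hsing α]; exact hent
        have := E.disj_prem ∅ α β β hα hβ
        rwa [hsing _] at this
      have e2 : E.ent ∅ (Form.imp (Form.or α β) β) := by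
        rw [← E.deduction ∅ (Form.or α β) β, hsing _]; exact e1
      have h2 : R (Form.not (Form.and α β)) (Form.or α β) :=
        rwS _ _ _ h (fun v hv => by simp [Form.eval, hv])
      have h3 : R (Form.not (Form.and α β)) β := hRW _ _ _ h2 e2
      refine contraR _ _ _ (hAnd _ _ _ h h3) (reflR _) (fun v => ?_)
      cases ha : Form.eval v α <;> cases hb : Form.eval v β <;> simp [Form.eval, ha, hb]
    · right; exact h
  · -- Conjunctiveness
    intro α β
    by_cases h1 : R (Form.not (Form.and α (Form.and α β))) α
    · by_cases h2 : R (Form.not (Form.and β (Form.and α β))) β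
      · left; left
        have h2' : R (Form.not (Form.and α (Form.and α β))) β := by
          refine lleS _ _ _ (fun v => ?_) h2
          cases ha : Form.eval v α <;> cases hb : Form.eval v β <;>
            simp [Form.eval, ha, hb]
        refine contraR _ _ _ (hAnd _ _ _ h1 h2') (reflR _) (fun v => ?_)
        cases ha : Form.eval v α <;> cases hb : Form.eval v β <;> simp [Form.eval, ha, hb]
      · right; right; exact h2
    · left; right; exact h1
end

section
/- Let |~ be a rational inference relation on L based on ⊢. Then C(O(|~)) = |~, i.e., for all formulas α, γ ∈ L: α C(O(|~)) γ if and only if α |~ γ. -/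
/-- `C(O(|~)) = |~` for a rational inference relation. -/
theorem stmt_11 {V : Type} (E : Entails V) (R : Form V → Form V → Prop)
    (hR : IsRational E.ent R) :
    ∀ α γ, Cmap E.ent (Omap R) α γ ↔ R α γ := by
  obtain ⟨⟨⟨sup, lle, rw', and'⟩, cut, cm, or'⟩, rm⟩ := hR
  -- semantic helpers
  have semS : ∀ {a b : Form V},
      (∀ v, Form.eval v a = true → Form.eval v b = true) → E.ent {a} b :=
    fun h => E.includes_classical _ _ (fun v hv => h v (hv _ rfl))
  have taut : ∀ {b : Form V}, (∀ v, Form.eval v b = true) → E.ent ∅ b :=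
    fun h => E.includes_classical _ _ (fun v _ => h v)
  have supR : ∀ {a b : Form V},
      (∀ v, Form.eval v a = true → Form.eval v b = true) → R a b :=
    fun h => sup _ _ (semS h)
  have lleR : ∀ {a b : Form V},
      (∀ v, Form.eval v a = Form.eval v b) → ∀ c, (R a c ↔ R b c) := by
    intro a b h c
    constructor
    · intro hr
      exact lle a b c (semS (fun v ha => (h v) ▸ ha))
        (semS (fun v hb => (h v).symm ▸ hb)) hr
    · intro hr
      exact lle b a c (semS (fun v hb => (h v).symm ▸ hb))
        (semS (fun v ha => (h v) ▸ ha)) hr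
  have rwR : ∀ {a b c : Form V}, R a b →
      (∀ v, Form.eval v b = true → Form.eval v c = true) → R a c := by
    intro a b c hr h
    refine rw' a b c hr (taut fun v => ?_)
    simp only [Form.eval]
    cases hb : Form.eval v b
    · simp
    · simp [h v hb]
  have botAll : ∀ {a c : Form V}, R a Form.bot → R a c :=
    fun hr => rwR hr (fun v h => by simp [Form.eval] at h)
  -- Claim A : the first disjunct of Cmap is equivalent to R a ⊥
  have claimA : ∀ a : Form V, (∀ β, Omap R β (Form.not a)) ↔ R a Form.bot := by
    intro a
    constructor
    · intro h
      rcases h Form.top with h1 | h2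
      · exact (lleR (fun v => by
          cases e : Form.eval v a <;> simp [Form.eval, e]) Form.bot).mp h1
      · exact absurd (supR fun v _ => by simp [Form.eval]) h2
    · intro h β
      by_cases hc : R (Form.not (Form.and β (Form.not a))) β
      · left
        have h2 : R (Form.and a β) Form.bot := cm a β Form.bot (botAll h) h
        have h3 : R (Form.and (Form.not (Form.and β (Form.not a))) β) Form.bot := by
          refine (lleR (fun v => ?_) Form.bot).mp h2
          cases ea : Form.eval v a <;> cases eb : Form.eval v β <;>
            simp [Form.eval, ea, eb]
        exact cut _ β Form.bot hc h3
      · right; exact hc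
  intro α γ
  constructor
  · -- Cmap → R
    rintro (h | ⟨β, hent, hle, hnle⟩)
    · exact botAll ((claimA α).mp h)
    · -- δ ≡ δ' ≡ α ∨ ¬β
      have hδδ' : ∀ c, R (Form.not (Form.and β (Form.not α))) c ↔
          R (Form.not (Form.and (Form.not α) β)) c := by
        intro c
        refine lleR (fun v => ?_) c
        cases ea : Form.eval v α <;> cases eb : Form.eval v β <;>
          simp [Form.eval, ea, eb]
      have hPQ := not_or.mp hnle
      have hP : ¬ R (Form.not (Form.and β (Form.not α))) Form.bot := hPQ.1
      have hQ : R (Form.not (Form.and β (Form.not α))) β := not_not.mp hPQ.2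
      rcases hle with h1 | h2
      · exact absurd ((hδδ' _).mpr h1) hP
      · have h3 : ¬ R (Form.not (Form.and β (Form.not α))) (Form.not α) :=
          fun hh => h2 ((hδδ' _).mp hh)
        have h4 := rm _ α β h3 hQ
        have h5 : R α β := by
          refine (lleR (fun v => ?_) β).mp h4
          cases ea : Form.eval v α <;> cases eb : Form.eval v β <;>
            simp [Form.eval, ea, eb]
        have h6 : R α (Form.and α β) := and' α α β (supR fun v h => h) h5
        have h7 : E.ent ∅ (Form.imp (Form.and α β) γ) := by
          refine (E.deduction ∅ (Form.and α β) γ).mp ?_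
          have : insert (Form.and α β) (∅ : Set (Form V)) = {Form.and α β} := by
            simp
          rw [this]; exact hent
        exact rw' α (Form.and α β) γ h6 h7
  · -- R → Cmap
    intro h
    by_cases hb : R α Form.bot
    · left; exact (claimA α).mpr hb
    · right
      refine ⟨Form.or (Form.not α) γ, ?_, ?_, ?_⟩
      · refine semS (fun v hv => ?_)
        revert hv
        cases ea : Form.eval v α <;> cases ec : Form.eval v γ <;>
          simp [Form.eval, ea, ec]
      · -- ¬α ≤ β
        refine Or.inr (fun hh => hb ?_)
        have heq : ∀ v, Form.eval v
            (Form.not (Form.and (Form.not α) (Form.or (Form.not α) γ))) =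
            Form.eval v α := by
          intro v
          cases ea : Form.eval v α <;> cases ec : Form.eval v γ <;>
            simp [Form.eval, ea, ec]
        have h1 : R α (Form.not α) := (lleR heq (Form.not α)).mp hh
        have h2 : R α (Form.and α (Form.not α)) :=
          and' α α (Form.not α) (supR fun v h => h) h1
        refine rwR h2 (fun v hv => ?_)
        revert hv
        cases ea : Form.eval v α <;> simp [Form.eval, ea]
      · -- ¬ (β ≤ ¬α)
        intro hh
        have heq : ∀ v, Form.eval v
            (Form.not (Form.and (Form.or (Form.not α) γ) (Form.not α))) =
            Form.eval v α := by
          intro v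
          cases ea : Form.eval v α <;> cases ec : Form.eval v γ <;>
            simp [Form.eval, ea, ec]
        rcases hh with h1 | h2
        · exact hb ((lleR heq Form.bot).mp h1)
        · refine h2 ((lleR heq (Form.or (Form.not α) γ)).mpr ?_)
          refine rwR h (fun v hc => ?_)
          simp [Form.eval, hc]
end

section
/- Let ≤ be a rational ordering on L. Then O(C(≤)) = ≤, i.e., for all formulas α, β ∈ L: α O(C(≤)) β if and only if α ≤ β. -/
/-- `O(C(≤)) = ≤` for a rational ordering. -/
theorem stmt_12 {V : Type} (E : Entails V) (le : Form V → Form V → Prop)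
    (hle : IsRationalOrdering E.ent le) :
    ∀ α β, Omap (Cmap E.ent le) α β ↔ le α β := by
  obtain ⟨htrans, hdom, hconj⟩ := hle
  have domS : ∀ a b : Form V, (∀ v : V → Bool, Form.eval v a = true → Form.eval v b = true) →
      le a b := by
    intro a b h
    exact hdom a b (E.includes_classical _ _ (fun v hv => h v (hv a (Set.mem_singleton a))))
  have entS : ∀ (a b : Form V), (∀ v : V → Bool, Form.eval v a = true → Form.eval v b = true) →
      E.ent (insert a ∅) b := by
    intro a b h
    exact E.includes_classical _ _ (fun v hv => h v (hv a (by simp)))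
  intro α β
  constructor
  · -- Omap (Cmap E.ent le) α β → le α β
    rintro (hC | hnC)
    · rcases hC with hall | ⟨x, hent, hl1, hl2⟩
      · -- everything ≤ ¬μ, and ¬μ ⊨ β
        refine htrans α (Form.not (Form.not (Form.and α β))) β (hall α) (domS _ _ ?_)
        intro v
        simp only [Form.eval]
        cases Form.eval v α <;> cases Form.eval v β <;> simp
      · -- witness x with ent {μ∧x} ⊥ and ¬μ < x
        have hd : E.ent {Form.and (Form.not (Form.and α β)) x}
            (Form.imp (Form.and (Form.not (Form.and α β)) x) Form.bot) := by
          have : E.ent (insert (Form.and (Form.not (Form.and α β)) x)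
              {Form.and (Form.not (Form.and α β)) x}) Form.bot := by
            rwa [Set.insert_eq_self.mpr (Set.mem_singleton _)]
          exact (E.deduction _ _ _).mp this
        have hd0 : E.ent (insert (Form.and (Form.not (Form.and α β)) x) ∅)
            (Form.imp (Form.and (Form.not (Form.and α β)) x) Form.bot) := by simpa using hd
        have hd1 : E.ent (insert (Form.not (Form.and (Form.not (Form.and α β)) x)) ∅)
            (Form.imp (Form.and (Form.not (Form.and α β)) x) Form.bot) := by
          refine entS _ _ ?_
          intro v
          simp only [Form.eval]
          cases Form.eval v α <;> cases Form.eval v β <;> cases Form.eval v x <;> simp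
        have hτ : le (Form.or (Form.and (Form.not (Form.and α β)) x)
              (Form.not (Form.and (Form.not (Form.and α β)) x)))
            (Form.imp (Form.and (Form.not (Form.and α β)) x) Form.bot) := by
          have := E.disj_prem ∅ _ _ _ hd0 hd1
          exact hdom _ _ (by simpa using this)
        have hxm : le (Form.and x (Form.imp (Form.and (Form.not (Form.and α β)) x) Form.bot))
            (Form.not (Form.not (Form.and α β))) := by
          refine domS _ _ ?_
          intro v
          simp only [Form.eval]
          cases Form.eval v α <;> cases Form.eval v β <;> cases Form.eval v x <;> simp
        rcases hconj x (Form.imp (Form.and (Form.not (Form.and α β)) x) Form.bot) with hc | hc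
        · exact absurd (htrans _ _ _ hc hxm) hl2
        · have h1 : le (Form.imp (Form.and (Form.not (Form.and α β)) x) Form.bot)
              (Form.not (Form.not (Form.and α β))) := htrans _ _ _ hc hxm
          have h2 : le α (Form.or (Form.and (Form.not (Form.and α β)) x)
              (Form.not (Form.and (Form.not (Form.and α β)) x))) := by
            refine domS _ _ ?_
            intro v
            simp only [Form.eval]
            cases Form.eval v α <;> cases Form.eval v β <;> cases Form.eval v x <;> simp
          have h3 : le α (Form.not (Form.not (Form.and α β))) :=
            htrans _ _ _ h2 (htrans _ _ _ hτ h1)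
          refine htrans _ _ _ h3 (domS _ _ ?_)
          intro v
          simp only [Form.eval]
          cases Form.eval v α <;> cases Form.eval v β <;> simp
    · -- ¬ Cmap μ α : take witness x := α
      by_contra hab
      apply hnC
      right
      refine ⟨α, ?_, ?_, ?_⟩
      · have := entS (Form.and (Form.not (Form.and α β)) α) α ?_
        · simpa using this
        · intro v
          simp only [Form.eval]
          cases Form.eval v α <;> cases Form.eval v β <;> simp
      · refine domS _ _ ?_
        intro v
        simp only [Form.eval]
        cases Form.eval v α <;> cases Form.eval v β <;> simp
      · intro hcon
        refine hab (htrans α (Form.not (Form.not (Form.and α β))) β hcon (domS _ _ ?_))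
        intro v
        simp only [Form.eval]
        cases Form.eval v α <;> cases Form.eval v β <;> simp
  · -- le α β → Omap (Cmap E.ent le) α β
    intro h
    by_cases hM : ∀ z : Form V, le z (Form.not (Form.not (Form.and α β)))
    · exact Or.inl (Or.inl hM)
    · right
      rintro (hall | ⟨x, hent, hl1, hl2⟩)
      · exact hM hall
      · have hαab : le α (Form.and α β) := by
          rcases hconj α β with h1 | h1
          · exact h1
          · exact htrans _ _ _ h h1
        have hd0 : E.ent (insert (Form.and (Form.not (Form.and α β)) x) ∅) α := by
          simpa using hent
        have hd1 : E.ent (insert (Form.and (Form.not (Form.not (Form.and α β))) x) ∅) α := by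
          refine entS _ _ ?_
          intro v
          simp only [Form.eval]
          cases Form.eval v α <;> cases Form.eval v β <;> cases Form.eval v x <;> simp
        have hdisj : le (Form.or (Form.and (Form.not (Form.and α β)) x)
            (Form.and (Form.not (Form.not (Form.and α β))) x)) α := by
          have := E.disj_prem ∅ _ _ _ hd0 hd1
          exact hdom _ _ (by simpa using this)
        have hx : le x (Form.or (Form.and (Form.not (Form.and α β)) x)
            (Form.and (Form.not (Form.not (Form.and α β))) x)) := by
          refine domS _ _ ?_
          intro v
          simp only [Form.eval]
          cases Form.eval v α <;> cases Form.eval v β <;> cases Form.eval v x <;> simp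
        have habn : le (Form.and α β) (Form.not (Form.not (Form.and α β))) := by
          refine domS _ _ ?_
          intro v
          simp only [Form.eval]
          cases Form.eval v α <;> cases Form.eval v β <;> simp
        exact hl2 (htrans _ _ _ (htrans _ _ _ hx hdisj) (htrans _ _ _ hαab habn))
end

section
/- Every rational inference relation is a ranked consequence operator: if |~ is a rational inference relation on L based on ⊢, then there exist a linear order ⟨I, <⟩ and a chain {B_i}_{i∈I} of sets of formulas of L (with B_i ⊆ B_j iff i ≤ j) such that |~ is equal to the ranked consequence operator based on ⊢ induced by {B_i}_{i∈I}. -/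
namespace S19

variable {V : Type}

/-- Conjunction of a list of formulas. -/
def conjL : List (Form V) → Form V
  | [] => Form.top
  | a :: l => Form.and a (conjL l)

lemma eval_conjL (v : V → Bool) : ∀ (L : List (Form V)),
    Form.eval v (conjL L) = true ↔ ∀ y ∈ L, Form.eval v y = true
  | [] => by simp [conjL, Form.eval]
  | a :: l => by
      simp [conjL, Form.eval, Bool.and_eq_true, eval_conjL v l]

/-- The comparison `κ p ≤ κ q` between "degrees of surprise" of formulas. -/
def kle (R : Form V → Form V → Prop) (p q : Form V) : Prop :=
  R (Form.or p q) Form.bot ∨ ¬ R (Form.or p q) (Form.not p)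

/-- Strict comparison. -/
def klt (R : Form V → Form V → Prop) (p q : Form V) : Prop :=
  kle R p q ∧ ¬ kle R q p

/-- The belief set at level `p`. -/
def Bset (R : Form V → Form V → Prop) (p : Form V) : Set (Form V) :=
  {γ | klt R p (Form.not γ)}

section Main

variable {E : Entails V} {R : Form V → Form V → Prop}

lemma Rsup (hR : IsRational E.ent R) {a b : Form V} (h : E.ent {a} b) : R a b :=
  hR.1.1.1 a b h

lemma Rsem (hR : IsRational E.ent R) {a b : Form V}
    (h : ∀ v, Form.eval v a = true → Form.eval v b = true) : R a b :=
  Rsup hR (E.includes_classical _ _ (fun v hv => h v (hv a rfl)))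

lemma Rw (hR : IsRational E.ent R) {a b c : Form V} (hab : R a b)
    (h : ∀ v, Form.eval v b = true → Form.eval v c = true) : R a c := by
  refine hR.1.1.2.2.1 a b c hab (E.includes_classical _ _ ?_)
  intro v _
  simp only [Form.eval]
  cases hb : Form.eval v b with
  | false => simp
  | true => simp [h v hb]

lemma Rlle (hR : IsRational E.ent R) {a b c : Form V}
    (hab : ∀ v, Form.eval v a = Form.eval v b) (h : R a c) : R b c := by
  refine hR.1.1.2.1 a b c ?_ ?_ h
  · exact E.includes_classical _ _ (fun v hv => by rw [← hab v]; exact hv a rfl)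
  · exact E.includes_classical _ _ (fun v hv => by rw [hab v]; exact hv b rfl)

lemma Rcong (hR : IsRational E.ent R) {a a' b b' : Form V}
    (ha : ∀ v, Form.eval v a = Form.eval v a')
    (hb : ∀ v, Form.eval v b = Form.eval v b') (h : R a b) : R a' b' :=
  Rw hR (Rlle hR ha h) (fun v hv => by rw [← hb v]; exact hv)

lemma Rand (hR : IsRational E.ent R) {a b c : Form V} :
    R a b → R a c → R a (Form.and b c) := hR.1.1.2.2.2 a b c

lemma Rrefl (hR : IsRational E.ent R) (a : Form V) : R a a := Rsem hR (fun _ h => h)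

lemma Rww (hR : IsRational E.ent R) {a b c d : Form V} (h1 : R a b) (h2 : R a c)
    (h : ∀ v, Form.eval v a = true → Form.eval v b = true →
      Form.eval v c = true → Form.eval v d = true) : R a d := by
  have h3 : R a (Form.and a (Form.and b c)) := Rand hR (Rrefl hR a) (Rand hR h1 h2)
  refine Rw hR h3 ?_
  intro v hv
  simp only [Form.eval, Bool.and_eq_true] at hv
  exact h v hv.1 hv.2.1 hv.2.2

lemma Rbot (hR : IsRational E.ent R) {a : Form V} (h : R a Form.bot) (c : Form V) :
    R a c :=
  Rw hR h (fun v hv => by simp [Form.eval] at hv)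

lemma Ror (hR : IsRational E.ent R) {a b c : Form V} :
    R a c → R b c → R (Form.or a b) c := hR.1.2.2.2 a b c

lemma Rcm (hR : IsRational E.ent R) {a b c : Form V} :
    R a b → R a c → R (Form.and a b) c := hR.1.2.2.1 a b c

lemma Rrm (hR : IsRational E.ent R) {a b c : Form V} :
    ¬ R a (Form.not b) → R a c → R (Form.and a b) c := hR.2 a b c

lemma L3or (hR : IsRational E.ent R) {a b : Form V}
    (h : R (Form.or a b) Form.bot) : R a Form.bot ∧ R b Form.bot := by
  constructor
  · have h1 : R (Form.or a b) a := Rbot hR h a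
    have h2 : R (Form.and (Form.or a b) a) Form.bot := Rcm hR h1 h
    refine Rlle hR (a := Form.and (Form.or a b) a) ?_ h2
    intro v; simp only [Form.eval]
    cases Form.eval v a <;> cases Form.eval v b <;> rfl
  · have h1 : R (Form.or a b) b := Rbot hR h b
    have h2 : R (Form.and (Form.or a b) b) Form.bot := Rcm hR h1 h
    refine Rlle hR (a := Form.and (Form.or a b) b) ?_ h2
    intro v; simp only [Form.eval]
    cases Form.eval v a <;> cases Form.eval v b <;> rfl

lemma descend (hR : IsRational E.ent R) {s φ χ : Form V}
    (hns : ¬ R s (Form.not φ)) (hsχ : R s χ)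
    (hsub : ∀ v, Form.eval v φ = true → Form.eval v s = true) : R φ χ := by
  have h1 : R (Form.and s φ) χ := Rrm hR hns hsχ
  refine Rlle hR (a := Form.and s φ) ?_ h1
  intro v; simp only [Form.eval]
  cases hφ : Form.eval v φ with
  | false => simp
  | true => simp [hsub v hφ]

lemma ktotal (hR : IsRational E.ent R) (p q : Form V) : kle R p q ∨ kle R q p := by
  by_cases h1 : R (Form.or p q) (Form.not p)
  · by_cases h2 : R (Form.or p q) (Form.not q)
    · left; left
      refine Rww hR h1 h2 ?_
      intro v
      simp only [Form.eval]
      cases Form.eval v p <;> cases Form.eval v q <;> simp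
    · right; right
      intro h
      refine h2 (Rcong hR ?_ (fun _ => rfl) h)
      intro v; simp only [Form.eval]
      cases Form.eval v p <;> cases Form.eval v q <;> rfl
  · left; right; exact h1

lemma kdom (hR : IsRational E.ent R) {q q' : Form V}
    (h : ∀ v, Form.eval v q' = true → Form.eval v q = true) : kle R q q' := by
  by_cases hs : R (Form.or q q') (Form.not q)
  · left
    refine Rww hR hs (Rrefl hR _) (fun v hv hn _ => ?_)
    have hq := h v
    revert hv hn hq
    simp only [Form.eval]
    cases Form.eval v q <;> cases Form.eval v q' <;> simp
  · right; exact hs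

lemma kbotTop (hR : IsRational E.ent R) : R (Form.not Form.top) Form.bot :=
  Rsem hR (fun v hv => by simp [Form.eval] at hv)

lemma kmax (hR : IsRational E.ent R) {a : Form V} (h : R a Form.bot) (x : Form V) :
    kle R x a := by
  by_cases hs : R (Form.or x a) (Form.not x)
  · left
    have h1 : R (Form.or x a) a := by
      refine Rww hR hs (Rrefl hR _) (fun v hv hn _ => ?_)
      revert hv hn
      simp only [Form.eval]
      cases Form.eval v x <;> cases Form.eval v a <;> simp
    have h2 : R (Form.or x a) (Form.not a) := by
      have ha : R a (Form.not a) := Rbot hR h _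
      have hb : R (Form.and x (Form.not a)) (Form.not a) :=
        Rsem hR (fun v hv => by
          simp only [Form.eval, Bool.and_eq_true] at hv; exact hv.2)
      have := Ror hR ha hb
      refine Rcong hR ?_ (fun _ => rfl) this
      intro v; simp only [Form.eval]
      cases Form.eval v x <;> cases Form.eval v a <;> rfl
    refine Rww hR h1 h2 (fun v hv h1' h2' => ?_)
    revert hv h1' h2'
    simp only [Form.eval]
    cases Form.eval v x <;> cases Form.eval v a <;> simp
  · right; exact hs

lemma ktrans (hR : IsRational E.ent R) {x y z : Form V}
    (hxy : kle R x y) (hyz : kle R y z) : kle R x z := by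
  by_contra hxz
  have hs1 : ¬ R (Form.or x z) Form.bot := fun h => hxz (Or.inl h)
  have hs2 : R (Form.or x z) (Form.not x) := by
    by_contra h; exact hxz (Or.inr h)
  set u := Form.or (Form.or x z) y with hu
  have t1 : R u (Form.not x) := by
    have ha : R (Form.and y (Form.and (Form.not x) (Form.not z))) (Form.not x) :=
      Rsem hR (fun v hv => by
        simp only [Form.eval, Bool.and_eq_true] at hv; exact hv.2.1)
    have hb := Ror hR hs2 ha
    refine Rcong hR ?_ (fun _ => rfl) hb
    intro v; simp only [hu, Form.eval]
    cases Form.eval v x <;> cases Form.eval v y <;> cases Form.eval v z <;> rfl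
  have t2 : ¬ R u Form.bot := fun h => hs1 (L3or hR h).1
  rcases hyz with hyz1 | hyz2
  · have hy : R y Form.bot := (L3or hR hyz1).1
    have hz : R z Form.bot := (L3or hR hyz1).2
    have ry : R u (Form.not y) := by
      have hb : R (Form.and (Form.or x z) (Form.not y)) (Form.not y) :=
        Rsem hR (fun v hv => by
          simp only [Form.eval, Bool.and_eq_true] at hv; exact hv.2)
      have := Ror hR (Rbot hR hy (Form.not y)) hb
      refine Rcong hR ?_ (fun _ => rfl) this
      intro v; simp only [hu, Form.eval]
      cases Form.eval v x <;> cases Form.eval v y <;> cases Form.eval v z <;> rfl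
    have rz : R u (Form.not z) := by
      have hb : R (Form.and (Form.or x y) (Form.not z)) (Form.not z) :=
        Rsem hR (fun v hv => by
          simp only [Form.eval, Bool.and_eq_true] at hv; exact hv.2)
      have := Ror hR (Rbot hR hz (Form.not z)) hb
      refine Rcong hR ?_ (fun _ => rfl) this
      intro v; simp only [hu, Form.eval]
      cases Form.eval v x <;> cases Form.eval v y <;> cases Form.eval v z <;> rfl
    refine t2 ?_
    have hand := Rand hR (Rrefl hR u) (Rand hR t1 (Rand hR ry rz))
    refine Rw hR hand (fun v hv => ?_)
    revert hv
    simp only [hu, Form.eval]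
    cases Form.eval v x <;> cases Form.eval v y <;> cases Form.eval v z <;> simp
  · rcases hxy with hxy1 | hxy2
    · have hy : R y Form.bot := (L3or hR hxy1).2
      apply hyz2
      have hb : R (Form.and z (Form.not y)) (Form.not y) :=
        Rsem hR (fun v hv => by
          simp only [Form.eval, Bool.and_eq_true] at hv; exact hv.2)
      have := Ror hR (Rbot hR hy (Form.not y)) hb
      refine Rcong hR ?_ (fun _ => rfl) this
      intro v; simp only [hu, Form.eval]
      cases Form.eval v y <;> cases Form.eval v z <;> rfl
    · by_cases hz : R u (Form.not z)
      · have huy : R u y := by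
          refine Rww hR t1 hz (fun v hv h1' h2' => ?_)
          revert hv h1' h2'
          simp only [hu, Form.eval]
          cases Form.eval v x <;> cases Form.eval v y <;> cases Form.eval v z <;> simp
        have hcond : ¬ R u (Form.not (Form.or x y)) := by
          intro h
          have h2 : R u (Form.not y) := Rw hR h (fun v hv => by
            revert hv; simp only [hu, Form.eval]
            cases Form.eval v x <;> cases Form.eval v y <;> simp)
          refine t2 (Rww hR huy h2 (fun v hv h1' h2' => ?_))
          revert hv h1' h2'
          simp only [hu, Form.eval]
          cases Form.eval v y <;> simp
        refine hxy2 (descend hR hcond t1 (fun v hv => ?_))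
        revert hv; simp only [hu, Form.eval]
        cases Form.eval v x <;> cases Form.eval v y <;> cases Form.eval v z <;> simp
      · by_cases hy : R u (Form.not y)
        · apply hyz2
          have hcond : ¬ R u (Form.not (Form.or y z)) := by
            intro h
            refine hz (Rw hR h (fun v hv => ?_))
            revert hv; simp only [hu, Form.eval]
            cases Form.eval v y <;> cases Form.eval v z <;> simp
          refine descend hR hcond hy (fun v hv => ?_)
          revert hv; simp only [hu, Form.eval]
          cases Form.eval v x <;> cases Form.eval v y <;> cases Form.eval v z <;> simp
        · apply hxy2
          have hcond : ¬ R u (Form.not (Form.or x y)) := by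
            intro h
            refine hy (Rw hR h (fun v hv => ?_))
            revert hv; simp only [hu, Form.eval]
            cases Form.eval v x <;> cases Form.eval v y <;> simp
          refine descend hR hcond t1 (fun v hv => ?_)
          revert hv; simp only [hu, Form.eval]
          cases Form.eval v x <;> cases Form.eval v y <;> cases Form.eval v z <;> simp

lemma kcong (hR : IsRational E.ent R) {p p' q q' : Form V}
    (hp : ∀ v, Form.eval v p = Form.eval v p')
    (hq : ∀ v, Form.eval v q = Form.eval v q') (h : kle R p q) : kle R p' q' := by
  have hor : ∀ v, Form.eval v (Form.or p q) = Form.eval v (Form.or p' q') := by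
    intro v; simp only [Form.eval, hp v, hq v]
  rcases h with h | h
  · exact Or.inl (Rcong hR hor (fun _ => rfl) h)
  · refine Or.inr (fun h' => h ?_)
    refine Rcong hR (fun v => (hor v).symm) (fun v => ?_) h'
    simp only [Form.eval, hp v]

lemma klt_cong (hR : IsRational E.ent R) {p p' q q' : Form V}
    (hp : ∀ v, Form.eval v p = Form.eval v p')
    (hq : ∀ v, Form.eval v q = Form.eval v q') (h : klt R p q) : klt R p' q' :=
  ⟨kcong hR hp hq h.1,
   fun h' => h.2 (kcong hR (fun v => (hq v).symm) (fun v => (hp v).symm) h')⟩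

lemma kmin (hR : IsRational E.ent R) (q1 q2 : Form V) :
    kle R q1 (Form.or q1 q2) ∨ kle R q2 (Form.or q1 q2) := by
  by_contra h
  have h1 : ¬ kle R q1 (Form.or q1 q2) := fun h' => h (Or.inl h')
  have h2 : ¬ kle R q2 (Form.or q1 q2) := fun h' => h (Or.inr h')
  have hb1 : ¬ R (Form.or q1 (Form.or q1 q2)) Form.bot := fun h' => h1 (Or.inl h')
  have ha1 : R (Form.or q1 (Form.or q1 q2)) (Form.not q1) := by
    by_contra h'; exact h1 (Or.inr h')
  have ha2 : R (Form.or q2 (Form.or q1 q2)) (Form.not q2) := by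
    by_contra h'; exact h2 (Or.inr h')
  have e1 : ∀ v, Form.eval v (Form.or q1 (Form.or q1 q2)) =
      Form.eval v (Form.or q1 q2) := by
    intro v; simp only [Form.eval]
    cases Form.eval v q1 <;> cases Form.eval v q2 <;> rfl
  have e2 : ∀ v, Form.eval v (Form.or q2 (Form.or q1 q2)) =
      Form.eval v (Form.or q1 q2) := by
    intro v; simp only [Form.eval]
    cases Form.eval v q1 <;> cases Form.eval v q2 <;> rfl
  have hA1 : R (Form.or q1 q2) (Form.not q1) := Rlle hR e1 ha1
  have hA2 : R (Form.or q1 q2) (Form.not q2) := Rlle hR e2 ha2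
  refine hb1 (Rlle hR (fun v => (e1 v).symm) ?_)
  refine Rww hR hA1 hA2 (fun v hv h1' h2' => ?_)
  revert hv h1' h2'
  simp only [Form.eval]
  cases Form.eval v q1 <;> cases Form.eval v q2 <;> simp

lemma klt_or (hR : IsRational E.ent R) {p q1 q2 : Form V}
    (h1 : klt R p q1) (h2 : klt R p q2) : klt R p (Form.or q1 q2) := by
  rcases kmin hR q1 q2 with hm | hm
  · exact ⟨ktrans hR h1.1 hm, fun hD => h1.2 (ktrans hR hm hD)⟩
  · exact ⟨ktrans hR h2.1 hm, fun hD => h2.2 (ktrans hR hm hD)⟩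

lemma klt_of_kle_klt (hR : IsRational E.ent R) {a b c : Form V}
    (hab : kle R a b) (hbc : klt R b c) : klt R a c :=
  ⟨ktrans hR hab hbc.1, fun hca => hbc.2 (ktrans hR hca hab)⟩

lemma klt_of_klt_kle (hR : IsRational E.ent R) {a b c : Form V}
    (hab : klt R a b) (hbc : kle R b c) : klt R a c :=
  ⟨ktrans hR hab.1 hbc, fun hca => hab.2 (ktrans hR hbc hca)⟩

lemma klt_notTop (hR : IsRational E.ent R) {p q : Form V} (h : klt R p q) :
    klt R p (Form.not Form.top) :=
  ⟨kmax hR (kbotTop hR) p,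
   fun hT => h.2 (ktrans hR (kmax hR (kbotTop hR) q) hT)⟩

lemma Rof_klt (hR : IsRational E.ent R) {α y : Form V}
    (h : ¬ kle R (Form.not y) α) : R α y := by
  have hA : ¬ R (Form.or (Form.not y) α) Form.bot := fun h' => h (Or.inl h')
  have hB : R (Form.or (Form.not y) α) (Form.not (Form.not y)) := by
    by_contra h'; exact h (Or.inr h')
  set s := Form.or (Form.not y) α with hs
  have hy : R s y := Rw hR hB (fun v hv => by
    revert hv; simp only [hs, Form.eval]; cases Form.eval v y <;> simp)
  have hα : R s α := by
    refine Rww hR hy (Rrefl hR s) (fun v hv h1' _ => ?_)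
    revert hv h1'
    simp only [hs, Form.eval]
    cases Form.eval v y <;> cases Form.eval v α <;> simp
  have hnα : ¬ R s (Form.not α) := by
    intro h'
    refine hA (Rww hR hα h' (fun v hv h1' h2' => ?_))
    revert hv h1' h2'
    simp only [hs, Form.eval]
    cases Form.eval v α <;> simp
  have hfin : R (Form.and s α) y := Rrm hR hnα hy
  refine Rlle hR (a := Form.and s α) (fun v => ?_) hfin
  simp only [hs, Form.eval]
  cases Form.eval v y <;> cases Form.eval v α <;> rfl

lemma impFold (hR : IsRational E.ent R) (a : Form V) (F : Finset (Form V)) :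
    ∀ b φ, E.ent (insert b (↑F : Set (Form V))) φ → R a b →
      (∀ y ∈ F, R a y) → R a φ := by
  classical
  induction F using Finset.induction_on with
  | empty =>
      intro b φ hent hb _
      rw [Finset.coe_empty] at hent
      exact hR.1.1.2.2.1 a b φ hb ((E.deduction ∅ b φ).1 hent)
  | @insert c F hcF ih =>
      intro b φ hent hb hF
      rw [Finset.coe_insert, Set.insert_comm] at hent
      have h2 := (E.deduction _ c φ).1 hent
      have h3 := ih b (Form.imp c φ) h2 hb (fun y hy => hF y (Finset.mem_insert_of_mem hy))
      have h4 := hF c (Finset.mem_insert_self c F)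
      refine Rww hR h3 h4 (fun v hv h1' h2' => ?_)
      revert hv h1' h2'
      simp only [Form.eval]
      cases Form.eval v c <;> cases Form.eval v φ <;> simp

lemma compactNe {X : Set (Form V)} {b ψ : Form V} (E : Entails V) (hb : b ∈ X)
    (h : E.ent X ψ) :
    ∃ F : Finset (Form V), (insert b (↑F : Set (Form V))) ⊆ X ∧
      E.ent (insert b (↑F : Set (Form V))) ψ := by
  classical
  have h1 : E.ent (insert b (X \ {b})) ψ := by
    have he : insert b (X \ {b}) = X := by
      rw [Set.insert_diff_singleton]
      exact Set.insert_eq_self.mpr hb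
    rwa [he]
  have h2 := (E.deduction _ b ψ).1 h1
  obtain ⟨Y, hYsub, hYfin, hY⟩ := E.compact _ _ h2
  refine ⟨hYfin.toFinset, ?_, ?_⟩
  · rw [Set.Finite.coe_toFinset]
    intro t ht
    rcases Set.mem_insert_iff.1 ht with rfl | htY
    · exact hb
    · exact (hYsub htY).1
  · rw [Set.Finite.coe_toFinset]
    exact (E.deduction Y b ψ).2 hY

lemma gendom (hR : IsRational E.ent R) {b : Form V} {F : Finset (Form V)} {ψ : Form V}
    (hent : E.ent (insert b (↑F : Set (Form V))) ψ) :
    kle R (Form.not (conjL (b :: F.toList))) (Form.not ψ) := by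
  set w := conjL (b :: F.toList) with hw
  by_cases hs : R (Form.or (Form.not w) (Form.not ψ)) (Form.not (Form.not w))
  · left
    set s := Form.or (Form.not w) (Form.not ψ) with hsdef
    have hRw : R s w := Rw hR hs (fun v hv => by
      revert hv; simp only [Form.eval]; cases Form.eval v w <;> simp)
    have hmem : ∀ y ∈ insert b (↑F : Set (Form V)), R s y := by
      intro y hy
      have hyL : y ∈ b :: F.toList := by
        rcases Set.mem_insert_iff.1 hy with rfl | hyF
        · exact List.mem_cons_self
        · exact List.mem_cons_of_mem _ (Finset.mem_toList.2 hyF)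
      refine Rw hR hRw (fun v hv => ?_)
      exact (eval_conjL v _).1 hv y hyL
    have hψ : R s ψ := impFold hR s F b ψ hent (hmem b (Set.mem_insert b _))
        (fun y hy => hmem y (Set.mem_insert_of_mem _ hy))
    refine Rww hR hRw hψ (fun v hv h1' h2' => ?_)
    revert hv h1' h2'
    simp only [hsdef, hw, conjL, Form.eval]
    cases Form.eval v b <;> cases Form.eval v (conjL F.toList) <;>
      cases Form.eval v ψ <;> simp
  · right; exact hs

lemma kdc (hR : IsRational E.ent R) {p : Form V}
    (hnm : klt R p (Form.not Form.top)) :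
    ∀ L : List (Form V), (∀ y ∈ L, klt R p (Form.not y)) →
      klt R p (Form.not (conjL L))
  | [], _ => hnm
  | y :: L, h => by
      have h1 := h y List.mem_cons_self
      have h2 := kdc hR hnm L (fun t ht => h t (List.mem_cons_of_mem _ ht))
      have h3 := klt_or hR h1 h2
      refine klt_cong hR (fun _ => rfl) (fun v => ?_) h3
      show Form.eval v (Form.or (Form.not y) (Form.not (conjL L))) =
        Form.eval v (Form.not (Form.and y (conjL L)))
      simp only [Form.eval]
      cases Form.eval v y <;> cases Form.eval v (conjL L) <;> rfl

lemma fold (hR : IsRational E.ent R) {p ψ : Form V} {X : Set (Form V)} {b₀ : Form V}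
    (hb₀ : b₀ ∈ X) (hX : ∀ y ∈ X, klt R p (Form.not y))
    (hnm : klt R p (Form.not Form.top)) (hent : E.ent X ψ) :
    klt R p (Form.not ψ) := by
  obtain ⟨F, hsub, hent'⟩ := compactNe E hb₀ hent
  have h1 := gendom hR hent'
  have h2 : klt R p (Form.not (conjL (b₀ :: F.toList))) := by
    refine kdc hR hnm _ (fun y hy => ?_)
    apply hX
    apply hsub
    rcases List.mem_cons.1 hy with rfl | hyL
    · exact Set.mem_insert _ _
    · exact Set.mem_insert_of_mem _ (Finset.mem_coe.2 (Finset.mem_toList.1 hyL))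
  exact klt_of_klt_kle hR h2 h1

end Main

end S19
/-- every rational inference relation is a ranked consequence
operator. -/
theorem stmt_19 {V : Type} (E : Entails V) (R : Form V → Form V → Prop)
    (hR : IsRational E.ent R) :
    ∃ (I : Type) (lo : LinearOrder I) (B : I → Set (Form V)),
      (∀ i j, B i ⊆ B j ↔ lo.le i j) ∧
      (∀ α β, R α β ↔ rankedOp E.ent B α β) := by
  classical
  set ent := E.ent with hent
  -- The index type: belief sets at non-maximal levels, ordered by inclusion.
  refine ⟨{S : Set (Form V) // ∃ p, S19.klt R p (Form.not Form.top) ∧ S = S19.Bset R p},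
    ?_, Subtype.val, ?_, ?_⟩
  · -- the linear order
    refine
      { le := fun i j => i.1 ⊆ j.1
        lt := fun i j => i.1 ⊆ j.1 ∧ ¬ j.1 ⊆ i.1
        le_refl := fun i => subset_rfl
        le_trans := fun a b c hab hbc => hab.trans hbc
        lt_iff_le_not_ge := fun a b => Iff.rfl
        le_antisymm := fun a b hab hba => Subtype.ext (Set.Subset.antisymm hab hba)
        le_total := ?_
        toDecidableLE := fun a b => Classical.propDecidable _ }
    rintro ⟨S, p, hp, rfl⟩ ⟨T, q, hq, rfl⟩
    rcases S19.ktotal hR p q with h | h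
    · right; intro γ hγ; exact S19.klt_of_kle_klt hR h hγ
    · left; intro γ hγ; exact S19.klt_of_kle_klt hR h hγ
  · intro i j; exact Iff.rfl
  · intro α γ
    constructor
    · intro hαγ
      by_cases hc : R α Form.bot
      · right
        rintro ⟨S, p, hnm, rfl⟩
        have hTmem : Form.top ∈ S19.Bset R p := hnm
        constructor
        · intro hentc
          have h1 : S19.klt R p (Form.not (Form.not Form.top)) :=
            S19.fold hR hTmem (fun y hy => hy) hnm hentc
          have h2 : S19.klt R p Form.top := by
            refine S19.klt_cong hR (fun _ => rfl) (fun v => ?_) h1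
            simp [Form.eval]
          exact h2.2 (S19.kdom hR (fun v _ => by simp [Form.eval]))
        · have hmem : Form.not α ∈ S19.Bset R p := by
            have h1 : S19.kle R p α := S19.kmax hR hc p
            have h2 : ¬ S19.kle R α p := fun h' =>
              hnm.2 (S19.ktrans hR (S19.kmax hR hc (Form.not Form.top)) h')
            refine S19.klt_cong hR (fun _ => rfl) (fun v => ?_) ⟨h1, h2⟩
            simp only [Form.eval]
            cases Form.eval v α <;> rfl
          exact E.includes_classical _ _
            (fun v hv => hv _ (Set.mem_insert_of_mem _ hmem))
      · left
        have hq : S19.klt R α (Form.not (Form.imp α γ)) := by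
          have heq : ∀ v, Form.eval v (Form.or α (Form.not (Form.imp α γ))) =
              Form.eval v α := by
            intro v; simp only [Form.eval]
            cases Form.eval v α <;> cases Form.eval v γ <;> rfl
          have heq' : ∀ v, Form.eval v (Form.or (Form.not (Form.imp α γ)) α) =
              Form.eval v α := by
            intro v; simp only [Form.eval]
            cases Form.eval v α <;> cases Form.eval v γ <;> rfl
          constructor
          · right
            intro hcon
            have h1 : R α (Form.not α) := S19.Rlle hR heq hcon
            refine hc (S19.Rww hR h1 (S19.Rrefl hR α) (fun v hv h1' _ => ?_))
            revert hv h1'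
            simp only [Form.eval]
            cases Form.eval v α <;> simp
          · intro hcon
            rcases hcon with h | h
            · exact hc (S19.Rlle hR heq' h)
            · apply h
              have h1 : R α (Form.not (Form.not (Form.imp α γ))) := by
                refine S19.Rww hR hαγ (S19.Rrefl hR α) (fun v hv h1' _ => ?_)
                revert hv h1'
                simp only [Form.eval]
                cases Form.eval v α <;> cases Form.eval v γ <;> simp
              exact S19.Rlle hR (fun v => (heq' v).symm) h1
        have hnm : S19.klt R α (Form.not Form.top) := S19.klt_notTop hR hq
        have hself : Form.imp α γ ∈ S19.Bset R α := hq
        refine ⟨⟨S19.Bset R α, α, hnm, rfl⟩, ?_, ?_⟩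
        · intro hentc
          have h1 : S19.klt R α (Form.not (Form.not α)) :=
            S19.fold hR hself (fun y hy => hy) hnm hentc
          have h2 : S19.klt R α α := by
            refine S19.klt_cong hR (fun _ => rfl) (fun v => ?_) h1
            simp only [Form.eval]
            cases Form.eval v α <;> rfl
          exact h2.2 h2.1
        · refine E.includes_classical _ _ (fun v hv => ?_)
          have h1 := hv α (Set.mem_insert _ _)
          have h2 := hv (Form.imp α γ) (Set.mem_insert_of_mem _ hself)
          revert h1 h2
          simp only [Form.eval]
          cases Form.eval v α <;> cases Form.eval v γ <;> simp
    · intro hro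
      rcases hro with ⟨⟨S, p, hnm, rfl⟩, h1, h2⟩ | hall
      · -- clause 1
        have hαp : S19.kle R α p := by
          by_cases h : S19.kle R α p
          · exact h
          · exfalso
            have hpα : S19.kle R p α := (S19.ktotal hR p α).resolve_right h
            have hmem : Form.not α ∈ S19.Bset R p := by
              refine S19.klt_cong hR (fun _ => rfl) (fun v => ?_) ⟨hpα, h⟩
              simp only [Form.eval]
              cases Form.eval v α <;> rfl
            exact h1 (E.includes_classical _ _ (fun v hv => hv _ hmem))
        obtain ⟨F, hsub, hent'⟩ := S19.compactNe E (Set.mem_insert α _) h2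
        have hall' : ∀ y ∈ insert α (↑F : Set (Form V)), R α y := by
          intro y hy
          rcases Set.mem_insert_iff.1 hy with rfl | hyF
          · exact S19.Rrefl hR _
          · rcases Set.mem_insert_iff.1 (hsub (Set.mem_insert_of_mem _ hyF)) with
              rfl | hyB
            · exact S19.Rrefl hR _
            · have hlt : S19.klt R α (Form.not y) := S19.klt_of_kle_klt hR hαp hyB
              exact S19.Rof_klt hR hlt.2
        exact S19.impFold hR α F α γ hent' (hall' α (Set.mem_insert _ _))
          (fun y hy => hall' y (Set.mem_insert_of_mem _ (Finset.mem_coe.2 hy)))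
      · -- clause 2
        by_cases hk : S19.kle R (Form.not Form.top) α
        · have hbot : R α Form.bot := by
            rcases hk with h | h
            · refine S19.Rlle hR (fun v => ?_) h
              simp [Form.eval]
            · exact absurd (S19.Rsem hR (fun v _ => by simp [Form.eval]) :
                R (Form.or (Form.not Form.top) α) (Form.not (Form.not Form.top))) h
          exact S19.Rbot hR hbot γ
        · exfalso
          have hαT : S19.klt R α (Form.not Form.top) :=
            ⟨(S19.ktotal hR α (Form.not Form.top)).resolve_right hk, hk⟩
          have hA := (hall ⟨S19.Bset R α, α, hαT, rfl⟩).2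
          have h1 : S19.klt R α (Form.not (Form.not α)) := by
            refine S19.fold hR (Set.mem_insert _ _) ?_ hαT hA
            intro y hy
            rcases Set.mem_insert_iff.1 hy with rfl | hyB
            · exact hαT
            · exact hyB
          have h2 : S19.klt R α α := by
            refine S19.klt_cong hR (fun _ => rfl) (fun v => ?_) h1
            simp only [Form.eval]
            cases Form.eval v α <;> rfl
          exact h2.2 h2.1
end
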